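/- For all integers m ≥ 2 and n ≥ 2, there exist a complete DFA A with m states over the alphabet {a,b,c}, whose unique final state is its initial state, and a complete DFA B with n states, such that every complete DFA accepting L(A)·L(B) = L(A)*·L(B) has at least m·(2^n − 1) − 2^(n−1) + 1 states. -/

import Mathlib

open Computability
open Fin.CommRing

namespace SCAux

variable (m n : ℕ) [NeZero m] [NeZero n]

def stA : Fin m → Fin 3 → Fin m := fun i x => if x = 0 then i + 1 else i

def stB : Fin n → Fin 3 → Fin n := fun s x =>
  if x = 0 then s else if x = 1 then s + 1 else if s = 0 then 0 else s + 1

def Ad : DFA (Fin 3) (Fin m) := ⟨stA m, 0, {0}⟩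
def Bd : DFA (Fin 3) (Fin n) := ⟨stB n, 0, {-1}⟩

def Dd : DFA (Fin 3) (Fin m × Finset (Fin n)) where
  step p x :=
    (stA m p.1 x,
      if stA m p.1 x = 0 then insert 0 (p.2.image (stB n · x)) else p.2.image (stB n · x))
  start := (0, {0})
  accept := {p | (-1 : Fin n) ∈ p.2}

variable {m n}

@[simp] lemma stA_a (i : Fin m) : stA m i 0 = i + 1 := rfl
@[simp] lemma stA_b (i : Fin m) : stA m i 1 = i := rfl
@[simp] lemma stA_c (i : Fin m) : stA m i 2 = i := rfl
@[simp] lemma stB_a (s : Fin n) : stB n s 0 = s := rfl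
@[simp] lemma stB_b (s : Fin n) : stB n s 1 = s + 1 := rfl

lemma evalFrom_cons (M : DFA (Fin 3) σ) (p : σ) (x : Fin 3) (w : List (Fin 3)) :
    M.evalFrom p (x :: w) = M.evalFrom (M.step p x) w := rfl

lemma Dd_fst (p : Fin m × Finset (Fin n)) (w : List (Fin 3)) :
    ((Dd m n).evalFrom p w).1 = (Ad m).evalFrom p.1 w := by
  induction w generalizing p with
  | nil => rfl
  | cons x w ih => rw [evalFrom_cons, evalFrom_cons, ih]; rfl

lemma mem_snd_evalFrom (i : Fin m) (S : Finset (Fin n)) (w : List (Fin 3)) (s : Fin n) :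
    s ∈ ((Dd m n).evalFrom (i, S) w).2 ↔
      (∃ t ∈ S, (Bd n).evalFrom t w = s) ∨
      (∃ u v, u ++ v = w ∧ u ≠ [] ∧ (Ad m).evalFrom i u = 0 ∧ (Bd n).evalFrom 0 v = s) := by
  induction w generalizing i S with
  | nil =>
      simp only [DFA.evalFrom_nil]
      constructor
      · intro hs; exact Or.inl ⟨s, hs, rfl⟩
      · rintro (⟨t, ht, rfl⟩ | ⟨u, v, huv, hne, -, -⟩)
        · exact ht
        · exact absurd (List.append_eq_nil_iff.mp huv).1 hne
  | cons x w ih =>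
      rw [evalFrom_cons]
      have hstep : (Dd m n).step (i, S) x =
          (stA m i x, if stA m i x = 0 then insert 0 (S.image (stB n · x))
            else S.image (stB n · x)) := rfl
      rw [hstep, ih]
      constructor
      · rintro (⟨t, ht, hB⟩ | ⟨u, v, huv, hne, hA, hB⟩)
        · by_cases h0 : stA m i x = 0
          · rw [if_pos h0] at ht
            rcases Finset.mem_insert.mp ht with rfl | ht
            · exact Or.inr ⟨[x], w, rfl, by simp, by simpa [Ad, DFA.evalFrom] using h0, hB⟩
            · rcases Finset.mem_image.mp ht with ⟨t₀, ht₀, rfl⟩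
              exact Or.inl ⟨t₀, ht₀, hB⟩
          · rw [if_neg h0] at ht
            rcases Finset.mem_image.mp ht with ⟨t₀, ht₀, rfl⟩
            exact Or.inl ⟨t₀, ht₀, hB⟩
        · exact Or.inr ⟨x :: u, v, by rw [← huv]; rfl, by simp,
            by simpa [Ad, evalFrom_cons] using hA, hB⟩
      · rintro (⟨t, ht, hB⟩ | ⟨u, v, huv, hne, hA, hB⟩)
        · refine Or.inl ⟨stB n t x, ?_, hB⟩
          by_cases h0 : stA m i x = 0
          · rw [if_pos h0]; exact Finset.mem_insert_of_mem (Finset.mem_image_of_mem _ ht)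
          · rw [if_neg h0]; exact Finset.mem_image_of_mem _ ht
        · rcases u with _ | ⟨x', u⟩
          · exact absurd rfl hne
          · rw [List.cons_append] at huv
            injection huv with hx huv
            subst hx
            rcases u with _ | ⟨y, u⟩
            · simp only [List.nil_append] at huv
              subst huv
              have h0 : stA m i x' = 0 := by simpa [Ad, evalFrom_cons] using hA
              refine Or.inl ⟨0, ?_, by simpa using hB⟩
              rw [if_pos h0]; exact Finset.mem_insert_self _ _
            · refine Or.inr ⟨y :: u, v, huv, by simp, ?_, hB⟩
              simpa [Ad, evalFrom_cons] using hA

lemma Bd_accept_iff (w : List (Fin 3)) : w ∈ (Bd n).accepts ↔ (Bd n).evalFrom 0 w = -1 := by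
  rw [DFA.mem_accepts]; exact Set.mem_singleton_iff

lemma Ad_accept_iff (w : List (Fin 3)) : w ∈ (Ad m).accepts ↔ (Ad m).evalFrom 0 w = 0 := by
  rw [DFA.mem_accepts]; exact Set.mem_singleton_iff

lemma Dd_accepts : (Dd m n).accepts = (Ad m).accepts * (Bd n).accepts := by
  ext w
  rw [Language.mem_mul, DFA.mem_accepts]
  have hst : (Dd m n).start = ((0 : Fin m), ({0} : Finset (Fin n))) := rfl
  have : (Dd m n).eval w ∈ (Dd m n).accept ↔ (-1 : Fin n) ∈ ((Dd m n).evalFrom ((0 : Fin m), ({0} : Finset (Fin n))) w).2 := Iff.rfl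
  rw [this, mem_snd_evalFrom]
  constructor
  · rintro (⟨t, ht, hB⟩ | ⟨u, v, huv, -, hA, hB⟩)
    · rcases Finset.mem_singleton.mp ht with rfl
      exact ⟨[], by rw [Ad_accept_iff]; rfl, w, (Bd_accept_iff w).mpr hB, by simp⟩
    · exact ⟨u, (Ad_accept_iff u).mpr hA, v, (Bd_accept_iff v).mpr hB, huv⟩
  · rintro ⟨u, hu, v, hv, rfl⟩
    rw [Ad_accept_iff] at hu; rw [Bd_accept_iff] at hv
    rcases u with _ | ⟨x, u⟩
    · exact Or.inl ⟨0, Finset.mem_singleton_self _, by simpa using hv⟩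
    · exact Or.inr ⟨x :: u, v, rfl, by simp, hu, hv⟩

lemma Ad_kstar : ((Ad m).accepts)∗ = (Ad m).accepts := by
  apply le_antisymm
  · intro w hw
    show w ∈ (Ad m).accepts
    replace hw := Language.mem_kstar.mp hw
    obtain ⟨L, rfl, hL⟩ := hw
    induction L with
    | nil => rw [List.flatten_nil, Ad_accept_iff]; rfl
    | cons a L ih =>
        rw [List.flatten_cons, Ad_accept_iff, DFA.evalFrom_of_append]
        have ha : (Ad m).evalFrom 0 a = 0 := (Ad_accept_iff a).mp (hL a (by simp))
        rw [ha]
        exact (Ad_accept_iff _).mp (ih fun y hy => hL y (by simp [hy]))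
  · exact le_kstar

lemma fin_cast_pred : ((n - 1 : ℕ) : Fin n) = -1 := by
  have h1 : (1 : ℕ) ≤ n := Nat.one_le_iff_ne_zero.mpr (NeZero.ne n)
  rw [Nat.cast_sub h1]
  simp

-- token shift under b's
lemma token_b (k : ℕ) (i : Fin m) (S : Finset (Fin n)) (t : Fin n) (ht : t ∈ S) :
    t + (k : Fin n) ∈ ((Dd m n).evalFrom (i, S) (List.replicate k 1)).2 := by
  induction k generalizing i S t with
  | zero => simpa using ht
  | succ k ih =>
      rw [List.replicate_succ, evalFrom_cons]
      have hstep : (Dd m n).step (i, S) 1 =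
          (i, if i = 0 then insert 0 (S.image (stB n · 1)) else S.image (stB n · 1)) := rfl
      rw [hstep]
      have hmem : t + 1 ∈ (if i = 0 then insert 0 (S.image (stB n · 1)) else S.image (stB n · 1)) := by
        have : t + 1 ∈ S.image (stB n · 1) := Finset.mem_image.mpr ⟨t, ht, rfl⟩
        split
        · exact Finset.mem_insert_of_mem this
        · exact this
      have h2 := ih i _ (t + 1) hmem
      have hc : t + ((k+1 : ℕ) : Fin n) = t + 1 + ((k : ℕ) : Fin n) := by push_cast; ring
      rw [hc]
      exact h2

-- closed form for b-runs from a nonzero first component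
lemma run_b_ne (i : Fin m) (hi : i ≠ 0) (S : Finset (Fin n)) (k : ℕ) :
    (Dd m n).evalFrom (i, S) (List.replicate k 1) = (i, S.image (· + (k : Fin n))) := by
  induction k generalizing S with
  | zero => simp
  | succ k ih =>
      rw [List.replicate_succ, evalFrom_cons]
      have hstep : (Dd m n).step (i, S) 1 = (i, S.image (· + 1)) := by
        have : (Dd m n).step (i, S) 1 =
            (i, if i = 0 then insert 0 (S.image (stB n · 1)) else S.image (stB n · 1)) := rfl
        rw [this, if_neg hi]
        rfl
      rw [hstep, ih]
      congr 1
      rw [Finset.image_image]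
      apply Finset.image_congr
      intro t _
      simp only [Function.comp_apply]
      push_cast
      ring

-- upper bound for membership after b-runs
lemma mem_run_b (j : Fin m) (T : Finset (Fin n)) (k : ℕ) (t : Fin n)
    (h : t ∈ ((Dd m n).evalFrom (j, T) (List.replicate k 1)).2) :
    (∃ t₀ ∈ T, t = t₀ + (k : Fin n)) ∨ ∃ p < k, t = (p : Fin n) := by
  induction k generalizing T with
  | zero => exact Or.inl ⟨t, by simpa using h, by simp⟩
  | succ k ih =>
      rw [List.replicate_succ, evalFrom_cons] at h
      have hstep : (Dd m n).step (j, T) 1 =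
          (j, if j = 0 then insert 0 (T.image (· + 1)) else T.image (· + 1)) := rfl
      rw [hstep] at h
      have h' := ih _ h
      rcases h' with ⟨t₀, ht₀, rfl⟩ | ⟨p, hp, rfl⟩
      · have ht₀' : t₀ ∈ insert 0 (T.image (· + 1)) := by
          revert ht₀; split
          · exact id
          · exact Finset.mem_insert_of_mem
        rcases Finset.mem_insert.mp ht₀' with rfl | ht₀''
        · refine Or.inr ⟨k, Nat.lt_succ_self _, by simp⟩
        · rcases Finset.mem_image.mp ht₀'' with ⟨t₁, ht₁, rfl⟩
          refine Or.inl ⟨t₁, ht₁, ?_⟩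
          push_cast
          ring
      · exact Or.inr ⟨p, Nat.lt_succ_of_lt hp, rfl⟩

-- a-runs on the singleton {0}
lemma run_a_zeroset (p : Fin m) (k : ℕ) :
    (Dd m n).evalFrom (p, ({0} : Finset (Fin n))) (List.replicate k 0) =
      (p + (k : Fin m), ({0} : Finset (Fin n))) := by
  induction k generalizing p with
  | zero => simp
  | succ k ih =>
      rw [List.replicate_succ, evalFrom_cons]
      have himg : ({0} : Finset (Fin n)).image (stB n · 0) = {0} := by simp
      have hstep : (Dd m n).step (p, ({0} : Finset (Fin n))) 0 = (p + 1, {0}) := by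
        have : (Dd m n).step (p, ({0} : Finset (Fin n))) 0 =
            (p + 1, if p + 1 = 0 then insert 0 (({0} : Finset (Fin n)).image (stB n · 0))
              else ({0} : Finset (Fin n)).image (stB n · 0)) := rfl
        rw [this, himg]
        simp
      rw [hstep, ih]
      congr 1
      push_cast
      ring

-- a-runs without crossing zero
lemma run_a_no_cross (i : Fin m) (S : Finset (Fin n)) (k : ℕ)
    (h1 : 1 ≤ i.val) (h2 : i.val + k < m) :
    (Dd m n).evalFrom (i, S) (List.replicate k 0) = (i + (k : Fin m), S) := by
  induction k generalizing i with
  | zero => simp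
  | succ k ih =>
      have him : 1 ≤ m := Nat.one_le_iff_ne_zero.mpr (NeZero.ne m)
      rw [List.replicate_succ, evalFrom_cons]
      have hv : (i + 1 : Fin m).val = i.val + 1 := by
        rw [Fin.val_add, Fin.val_one', Nat.mod_eq_of_lt (show 1 < m by omega),
          Nat.mod_eq_of_lt (by omega)]
      have hne : (i + 1 : Fin m) ≠ 0 := by
        intro h
        rw [Fin.ext_iff] at h
        rw [hv] at h
        simp at h
      have himg : S.image (stB n · 0) = S := by
        have : (fun x => stB n x 0) = id := by funext x; rfl
        rw [this, Finset.image_id]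
      have hstep : (Dd m n).step (i, S) 0 = (i + 1, S) := by
        have h0 : (Dd m n).step (i, S) 0 =
            (i + 1, if i + 1 = 0 then insert 0 (S.image (stB n · 0)) else S.image (stB n · 0)) := rfl
        rw [h0, if_neg hne, himg]
      rw [hstep, ih (i + 1) (by rw [hv]; omega) (by rw [hv]; omega)]
      congr 1
      push_cast
      ring

lemma step_a_wrap (i : Fin m) (h : i + 1 = 0) (S : Finset (Fin n)) :
    (Dd m n).step (i, S) 0 = (0, insert 0 S) := by
  have himg : S.image (stB n · 0) = S := by
    have : (fun x => stB n x 0) = id := by funext x; rfl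
    rw [this, Finset.image_id]
  have h0 : (Dd m n).step (i, S) 0 =
      (i + 1, if i + 1 = 0 then insert 0 (S.image (stB n · 0)) else S.image (stB n · 0)) := rfl
  rw [h0, if_pos h, himg, h]

lemma Dd_mono (w : List (Fin 3)) (i : Fin m) (S T : Finset (Fin n)) (hST : S ⊆ T) :
    ((Dd m n).evalFrom (i, S) w).2 ⊆ ((Dd m n).evalFrom (i, T) w).2 := by
  induction w generalizing i S T with
  | nil => simpa using hST
  | cons x w ih =>
      rw [evalFrom_cons, evalFrom_cons]
      have hS : (Dd m n).step (i, S) x =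
          (stA m i x, if stA m i x = 0 then insert 0 (S.image (stB n · x))
            else S.image (stB n · x)) := rfl
      have hT : (Dd m n).step (i, T) x =
          (stA m i x, if stA m i x = 0 then insert 0 (T.image (stB n · x))
            else T.image (stB n · x)) := rfl
      rw [hS, hT]
      apply ih
      have himg : S.image (stB n · x) ⊆ T.image (stB n · x) := Finset.image_subset_image hST
      split
      · exact Finset.insert_subset_insert _ himg
      · exact himg

def cB : Fin n → Fin n := fun s => stB n s 2

lemma cB_zero : cB (0 : Fin n) = 0 := rfl

lemma cB_iter_zero (k : ℕ) : cB^[k] (0 : Fin n) = 0 :=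
  Function.iterate_fixed cB_zero k

lemma cB_iter_eq_zero (k : ℕ) (t : Fin n) (h : t = 0 ∨ n ≤ t.val + k) : cB^[k] t = 0 := by
  induction k generalizing t with
  | zero =>
      rcases h with rfl | h
      · rfl
      · exact absurd t.isLt (by omega)
  | succ k ih =>
      rw [Function.iterate_succ_apply]
      apply ih
      rcases h with rfl | h
      · exact Or.inl cB_zero
      · by_cases ht : t = 0
        · subst ht; exact Or.inl cB_zero
        · have hc : cB t = t + 1 := by
            show stB n t 2 = t + 1
            unfold stB
            rw [if_neg (by decide), if_neg (by decide), if_neg ht]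
          rw [hc]
          by_cases hl : t.val + 1 < n
          · right
            have hval : ((t + 1 : Fin n) : ℕ) = t.val + 1 := by
              rw [Fin.val_add, Fin.val_one', Nat.mod_eq_of_lt (show (1:ℕ) < n by omega),
                Nat.mod_eq_of_lt (show t.val + 1 < n by omega)]
            rw [hval]
            omega
          · left
            have hv1 : 1 ≤ t.val := Nat.one_le_iff_ne_zero.mpr (fun hh => ht (Fin.ext hh))
            have hlt := t.isLt
            have h2 : t.val = n - 1 := by omega
            apply Fin.ext
            rw [Fin.val_add, Fin.val_one', Fin.val_zero,
              Nat.mod_eq_of_lt (show (1:ℕ) < n by omega), h2]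
            have h3 : n - 1 + 1 = n := by omega
            rw [h3, Nat.mod_self]

lemma cB_iter_full (t : Fin n) : cB^[n-1] t = 0 := by
  apply cB_iter_eq_zero
  by_cases ht : t = 0
  · exact Or.inl ht
  · right
    have : 1 ≤ t.val := Nat.one_le_iff_ne_zero.mpr (fun h => ht (Fin.ext h))
    have : 1 ≤ n := Nat.one_le_iff_ne_zero.mpr (NeZero.ne n)
    omega

lemma token_c (k : ℕ) (i : Fin m) (S : Finset (Fin n)) (t : Fin n) (ht : t ∈ S) :
    cB^[k] t ∈ ((Dd m n).evalFrom (i, S) (List.replicate k 2)).2 := by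
  induction k generalizing S t with
  | zero => simpa using ht
  | succ k ih =>
      rw [List.replicate_succ, evalFrom_cons]
      have hstep : (Dd m n).step (i, S) 2 =
          (i, if i = 0 then insert 0 (S.image (stB n · 2)) else S.image (stB n · 2)) := rfl
      rw [hstep, Function.iterate_succ_apply]
      apply ih
      have : stB n t 2 ∈ S.image (stB n · 2) := Finset.mem_image_of_mem _ ht
      split
      · exact Finset.mem_insert_of_mem this
      · exact this

lemma run_c_subset (k : ℕ) (i : Fin m) (S : Finset (Fin n)) :
    ((Dd m n).evalFrom (i, S) (List.replicate k 2)).2 ⊆ S.image (cB^[k]) ∪ {0} := by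
  induction k generalizing S with
  | zero => simp
  | succ k ih =>
      rw [List.replicate_succ, evalFrom_cons]
      have hstep : (Dd m n).step (i, S) 2 =
          (i, if i = 0 then insert 0 (S.image (stB n · 2)) else S.image (stB n · 2)) := rfl
      rw [hstep]
      have hsub : (if i = 0 then insert 0 (S.image (stB n · 2)) else S.image (stB n · 2)) ⊆
          insert 0 (S.image cB) := by
        split
        · exact Finset.insert_subset_insert _ (by rfl)
        · exact Finset.subset_insert _ _
      refine (Dd_mono _ _ _ _ hsub).trans ((ih _).trans ?_)
      intro x hx
      rcases Finset.mem_union.mp hx with hx | hx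
      · rcases Finset.mem_image.mp hx with ⟨y, hy, rfl⟩
        rcases Finset.mem_insert.mp hy with rfl | hy
        · exact Finset.mem_union_right _ (by simp [cB_iter_zero])
        · rcases Finset.mem_image.mp hy with ⟨z, hz, rfl⟩
          apply Finset.mem_union_left
          apply Finset.mem_image_of_mem
          exact hz
      · exact Finset.mem_union_right _ hx

lemma Ad_eval_nona (i : Fin m) (x : Fin 3) (hx : x ≠ 0) : stA m i x = i := by
  unfold stA; rw [if_neg hx]

lemma Dd_fst_rep_nona (i : Fin m) (S : Finset (Fin n)) (x : Fin 3) (hx : x ≠ 0) (k : ℕ) :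
    ((Dd m n).evalFrom (i, S) (List.replicate k x)).1 = i := by
  induction k generalizing S with
  | zero => rfl
  | succ k ih =>
      rw [List.replicate_succ, evalFrom_cons]
      have hstep : (Dd m n).step (i, S) x =
          (stA m i x, if stA m i x = 0 then insert 0 (S.image (stB n · x))
            else S.image (stB n · x)) := rfl
      rw [hstep, Ad_eval_nona i x hx]
      exact ih _

lemma run_c_phase (i : Fin m) (S : Finset (Fin n)) (hS : S.Nonempty) :
    (Dd m n).evalFrom (i, S) (List.replicate (n-1) 2) = (i, {0}) := by
  obtain ⟨t, ht⟩ := hS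
  have h1 : ((Dd m n).evalFrom (i, S) (List.replicate (n-1) 2)).1 = i :=
    Dd_fst_rep_nona i S 2 (by decide) (n-1)
  have h0 : (0 : Fin n) ∈ ((Dd m n).evalFrom (i, S) (List.replicate (n-1) 2)).2 := by
    have := token_c (n-1) i S t ht
    rwa [cB_iter_full] at this
  have hsub : ((Dd m n).evalFrom (i, S) (List.replicate (n-1) 2)).2 ⊆ {0} := by
    refine (run_c_subset (n-1) i S).trans ?_
    intro x hx
    rcases Finset.mem_union.mp hx with hx | hx
    · rcases Finset.mem_image.mp hx with ⟨y, hy, rfl⟩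
      rw [cB_iter_full]
      exact Finset.mem_singleton_self _
    · exact hx
  have h2 : ((Dd m n).evalFrom (i, S) (List.replicate (n-1) 2)).2 = {0} :=
    Finset.Subset.antisymm hsub (Finset.singleton_subset_iff.mpr h0)
  exact Prod.ext h1 h2

-- acceptance from (0, {0}) after n b's
lemma accept_bn (hn : 2 ≤ n) :
    (-1 : Fin n) ∈ ((Dd m n).evalFrom ((0 : Fin m), ({0} : Finset (Fin n))) (List.replicate n 1)).2 := by
  have hn1 : List.replicate n (1 : Fin 3) = 1 :: List.replicate (n-1) 1 := by
    rw [← List.replicate_succ]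
    congr 1
    omega
  rw [hn1, evalFrom_cons]
  have hstep : (Dd m n).step ((0 : Fin m), ({0} : Finset (Fin n))) 1 =
      ((0 : Fin m), insert 0 (({0} : Finset (Fin n)).image (· + 1))) := by
    have : (Dd m n).step ((0 : Fin m), ({0} : Finset (Fin n))) 1 =
        ((0:Fin m), if (0:Fin m) = 0 then insert 0 (({0}:Finset (Fin n)).image (stB n · 1))
          else ({0}:Finset (Fin n)).image (stB n · 1)) := rfl
    rw [this, if_pos rfl]
    rfl
  rw [hstep]
  have := token_b (n-1) (0 : Fin m) (insert 0 (({0} : Finset (Fin n)).image (· + 1))) 0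
    (Finset.mem_insert_self _ _)
  rw [zero_add, fin_cast_pred] at this
  exact this

lemma neg_one_ne_zero' (hn : 2 ≤ n) : (-1 : Fin n) ≠ 0 := by
  intro h
  rw [← fin_cast_pred, Fin.ext_iff, Fin.val_natCast, Fin.val_zero,
    Nat.mod_eq_of_lt (by omega)] at h
  omega

lemma dist_sets (i j : Fin m) (S T : Finset (Fin n)) (s : Fin n) (hs : s ∈ S) (hs' : s ∉ T) :
    ∃ z, (-1 : Fin n) ∈ ((Dd m n).evalFrom (i, S) z).2 ∧
      (-1 : Fin n) ∉ ((Dd m n).evalFrom (j, T) z).2 := by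
  have hsn : s.val ≤ n - 1 := by have := s.isLt; omega
  refine ⟨List.replicate (n - 1 - s.val) 1, ?_, ?_⟩
  · have := token_b (n - 1 - s.val) i S s hs
    have hc : s + ((n - 1 - s.val : ℕ) : Fin n) = -1 := by
      have h' : ((s.val : ℕ) : Fin n) + ((n - 1 - s.val : ℕ) : Fin n) = -1 := by
        rw [← Nat.cast_add, show s.val + (n - 1 - s.val) = n - 1 by omega, fin_cast_pred]
      rwa [Fin.cast_val_eq_self] at h'
    rwa [hc] at this
  · intro hmem
    rcases mem_run_b j T (n - 1 - s.val) _ hmem with ⟨t₀, ht₀, heq⟩ | ⟨p, hp, heq⟩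
    · have : t₀ = s := by
        have h1 : t₀ = -1 - ((n - 1 - s.val : ℕ) : Fin n) := by
          rw [heq]; ring
        rw [h1, ← fin_cast_pred, ← Nat.cast_sub (by omega),
          show n - 1 - (n - 1 - s.val) = s.val by omega, Fin.cast_val_eq_self]
      rw [this] at ht₀
      exact hs' ht₀
    · have h1 : ((p : Fin n)).val = p := by
        rw [Fin.val_natCast, Nat.mod_eq_of_lt (by omega)]
      have h2 : ((-1 : Fin n)).val = n - 1 := by
        rw [← fin_cast_pred, Fin.val_natCast, Nat.mod_eq_of_lt (by omega)]
      rw [heq] at h2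
      rw [h1] at h2
      omega

lemma dist_comps (hn : 2 ≤ n) (i j : Fin m) (hij : i ≠ j) (S T : Finset (Fin n))
    (hS : S.Nonempty) (hT : T.Nonempty) :
    ∃ z, (-1 : Fin n) ∈ ((Dd m n).evalFrom (i, S) z).2 ∧
      (-1 : Fin n) ∉ ((Dd m n).evalFrom (j, T) z).2 := by
  refine ⟨List.replicate (n-1) 2 ++ (List.replicate (m - i.val) 0 ++ List.replicate n 1), ?_, ?_⟩
  · rw [DFA.evalFrom_of_append, DFA.evalFrom_of_append, run_c_phase i S hS, run_a_zeroset]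
    have hc : i + ((m - i.val : ℕ) : Fin m) = 0 := by
      have h' : ((i.val : ℕ) : Fin m) + ((m - i.val : ℕ) : Fin m) = 0 := by
        rw [← Nat.cast_add, show i.val + (m - i.val) = m by have := i.isLt; omega,
          Fin.natCast_self]
      rwa [Fin.cast_val_eq_self] at h'
    rw [hc]
    exact accept_bn hn
  · rw [DFA.evalFrom_of_append, DFA.evalFrom_of_append, run_c_phase j T hT, run_a_zeroset]
    have hc : i + ((m - i.val : ℕ) : Fin m) = 0 := by
      have h' : ((i.val : ℕ) : Fin m) + ((m - i.val : ℕ) : Fin m) = 0 := by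
        rw [← Nat.cast_add, show i.val + (m - i.val) = m by have := i.isLt; omega,
          Fin.natCast_self]
      rwa [Fin.cast_val_eq_self] at h'
    have hd : j + ((m - i.val : ℕ) : Fin m) ≠ 0 := by
      intro h
      exact hij (add_right_cancel (hc.trans h.symm))
    rw [run_b_ne _ hd]
    intro hmem
    simp only [Finset.image_singleton, Finset.mem_singleton] at hmem
    rw [Fin.natCast_self, add_zero] at hmem
    exact neg_one_ne_zero' hn hmem

lemma step_a_zero (hm : 2 ≤ m) (S : Finset (Fin n)) :
    (Dd m n).step ((0 : Fin m), S) 0 = (1, S) := by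
  have hone : (1 : Fin m).val = 1 := by rw [Fin.val_one', Nat.mod_eq_of_lt (by omega)]
  have h1ne : (1 : Fin m) ≠ 0 := by
    intro h; rw [Fin.ext_iff, hone] at h; simp at h
  have himg : S.image (stB n · 0) = S := by
    have : (fun x => stB n x 0) = id := by funext x; rfl
    rw [this, Finset.image_id]
  have h0 : (Dd m n).step ((0:Fin m), S) 0 =
      ((0:Fin m) + 1, if (0:Fin m) + 1 = 0 then insert 0 (S.image (stB n · 0))
        else S.image (stB n · 0)) := rfl
  rw [h0, himg, zero_add, if_neg h1ne]

lemma run_a_from_zero (hm : 2 ≤ m) (i : Fin m) (hi : i ≠ 0) (S : Finset (Fin n)) :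
    (Dd m n).evalFrom ((0 : Fin m), S) (List.replicate i.val 0) = (i, S) := by
  have hone : (1 : Fin m).val = 1 := by rw [Fin.val_one', Nat.mod_eq_of_lt (by omega)]
  have hiv : 1 ≤ i.val := by
    rcases Nat.eq_zero_or_pos i.val with h | h
    · exact absurd (Fin.ext h) hi
    · exact h
  have hrep : List.replicate i.val (0 : Fin 3) = 0 :: List.replicate (i.val - 1) 0 := by
    rw [← List.replicate_succ]; congr 1; omega
  rw [hrep, evalFrom_cons, step_a_zero hm,
    run_a_no_cross 1 S (i.val - 1) (le_of_eq hone.symm) (by rw [hone]; have := i.isLt; omega)]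
  congr 1
  have : (1 : Fin m) + ((i.val - 1 : ℕ) : Fin m) = (((1 : ℕ)) : Fin m) + ((i.val - 1 : ℕ) : Fin m) := by
    rw [Nat.cast_one]
  rw [this, ← Nat.cast_add, show 1 + (i.val - 1) = i.val by omega, Fin.cast_val_eq_self]

lemma grow (hm : 2 ≤ m) (S : Finset (Fin n)) (t : Fin n) :
    (Dd m n).evalFrom ((0 : Fin m), S)
      ((0 : Fin 3) :: (List.replicate t.val 1 ++ (List.replicate (m-2) 0 ++ [0])))
      = ((0 : Fin m), insert 0 (S.image (· + t))) := by
  have hone : (1 : Fin m).val = 1 := by rw [Fin.val_one', Nat.mod_eq_of_lt (by omega)]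
  have h1ne : (1 : Fin m) ≠ 0 := by
    intro h; rw [Fin.ext_iff, hone] at h; simp at h
  rw [evalFrom_cons, step_a_zero hm, DFA.evalFrom_of_append, run_b_ne 1 h1ne S t.val,
    Fin.cast_val_eq_self, DFA.evalFrom_of_append,
    run_a_no_cross 1 _ (m-2) (le_of_eq hone.symm) (by rw [hone]; omega),
    DFA.evalFrom_singleton]
  have hwrap : ((1 : Fin m) + ((m - 2 : ℕ) : Fin m)) + 1 = 0 := by
    have h' : (((1:ℕ) : Fin m) + ((m - 2 : ℕ) : Fin m)) + ((1:ℕ) : Fin m) = 0 := by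
      rw [← Nat.cast_add, ← Nat.cast_add, show 1 + (m - 2) + 1 = m by omega, Fin.natCast_self]
    rwa [Nat.cast_one] at h'
  rw [step_a_wrap _ hwrap]

lemma reach0 (hm : 2 ≤ m) : ∀ k (T : Finset (Fin n)), (T.erase 0).card = k →
    ∃ w, (Dd m n).eval w = ((0 : Fin m), insert 0 T) := by
  intro k
  induction k using Nat.strong_induction_on with
  | _ k ih =>
    intro T hT
    by_cases h : T.erase 0 = ∅
    · refine ⟨[], ?_⟩
      have hins : insert (0 : Fin n) T = {0} := by
        ext x
        simp only [Finset.mem_insert, Finset.mem_singleton]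
        constructor
        · rintro (rfl | hx)
          · exact rfl
          · by_contra hne
            exact (Finset.eq_empty_iff_forall_notMem.mp h x) (Finset.mem_erase.mpr ⟨hne, hx⟩)
        · rintro rfl; exact Or.inl rfl
      rw [hins]
      rfl
    · obtain ⟨t, ht⟩ := Finset.nonempty_iff_ne_empty.mpr h
      have ht0 : t ≠ 0 := (Finset.mem_erase.mp ht).1
      have htT : t ∈ T := (Finset.mem_erase.mp ht).2
      set T' := (T.erase 0).image (· - t) with hT'def
      have h0T' : (0 : Fin n) ∈ T' := Finset.mem_image.mpr ⟨t, ht, sub_self t⟩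
      have hcard : (T'.erase 0).card < k := by
        have hc1 : T'.card = (T.erase 0).card :=
          Finset.card_image_of_injective _ sub_left_injective
        have hc2 := Finset.card_erase_of_mem h0T'
        have hpos : 0 < (T.erase 0).card := Finset.card_pos.mpr ⟨t, ht⟩
        omega
      obtain ⟨w', hw'⟩ := ih _ hcard T' rfl
      refine ⟨w' ++ ((0 : Fin 3) :: (List.replicate t.val 1 ++ (List.replicate (m-2) 0 ++ [0]))), ?_⟩
      have hw'' : (Dd m n).evalFrom (Dd m n).start w' = ((0 : Fin m), insert 0 T') := hw'
      show (Dd m n).evalFrom (Dd m n).start _ = _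
      rw [DFA.evalFrom_of_append, hw'', grow hm]
      have h2 : (insert (0:Fin n) T').image (· + t) = insert t (T.erase 0) := by
        rw [Finset.image_insert, zero_add, hT'def, Finset.image_image]
        congr 1
        have hfun : ((· + t) ∘ (· - t)) = (id : Fin n → Fin n) := by
          funext x; simp
        rw [hfun, Finset.image_id]
      rw [h2]
      congr 1
      ext x
      simp only [Finset.mem_insert, Finset.mem_erase]
      constructor
      · rintro (rfl | rfl | ⟨-, hx⟩)
        · exact Or.inl rfl
        · exact Or.inr htT
        · exact Or.inr hx
      · rintro (rfl | hx)
        · exact Or.inl rfl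
        · by_cases hx0 : x = 0
          · exact Or.inl hx0
          · exact Or.inr (Or.inr ⟨hx0, hx⟩)

lemma reach (hm : 2 ≤ m) (i : Fin m) (S : Finset (Fin n)) (hS : S.Nonempty)
    (h0 : i = 0 → (0 : Fin n) ∈ S) : ∃ w, (Dd m n).eval w = (i, S) := by
  by_cases hi : i = 0
  · subst hi
    obtain ⟨w, hw⟩ := reach0 hm (S.erase 0).card S rfl
    rw [Finset.insert_eq_self.mpr (h0 rfl)] at hw
    exact ⟨w, hw⟩
  · obtain ⟨s, hs⟩ := hS
    set T' := S.image (· - s) with hT'def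
    have h0T' : (0 : Fin n) ∈ T' := Finset.mem_image.mpr ⟨s, hs, sub_self s⟩
    obtain ⟨w', hw'⟩ := reach0 hm (T'.erase 0).card T' rfl
    rw [Finset.insert_eq_self.mpr h0T'] at hw'
    refine ⟨w' ++ (List.replicate i.val 0 ++ List.replicate s.val 1), ?_⟩
    have hw'' : (Dd m n).evalFrom (Dd m n).start w' = ((0 : Fin m), T') := hw'
    show (Dd m n).evalFrom (Dd m n).start _ = _
    rw [DFA.evalFrom_of_append, hw'', DFA.evalFrom_of_append, run_a_from_zero hm i hi,
      run_b_ne i hi, Fin.cast_val_eq_self]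
    congr 1
    rw [hT'def, Finset.image_image]
    have hfun : ((· + s) ∘ (· - s)) = (id : Fin n → Fin n) := by
      funext x; simp
    rw [hfun, Finset.image_id]

lemma dist_all (hn : 2 ≤ n) (p q : Fin m × Finset (Fin n))
    (hp : p.2.Nonempty) (hq : q.2.Nonempty) (hne : p ≠ q) :
    ∃ z, ¬(((-1 : Fin n) ∈ ((Dd m n).evalFrom p z).2) ↔
      ((-1 : Fin n) ∈ ((Dd m n).evalFrom q z).2)) := by
  obtain ⟨i, S⟩ := p
  obtain ⟨j, T⟩ := q
  by_cases hST : S = T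
  · subst hST
    have hij : i ≠ j := fun h => hne (by rw [h])
    obtain ⟨z, h1, h2⟩ := dist_comps hn i j hij S S hp hq
    exact ⟨z, fun hiff => h2 (hiff.mp h1)⟩
  · have : ∃ s : Fin n, ¬(s ∈ S ↔ s ∈ T) := by
      by_contra hc
      push_neg at hc
      exact hST (Finset.ext fun s => hc s)
    obtain ⟨s, hsiff⟩ := this
    by_cases hsS : s ∈ S
    · have hsT : s ∉ T := fun h => hsiff ⟨fun _ => h, fun _ => hsS⟩
      obtain ⟨z, h1, h2⟩ := dist_sets i j S T s hsS hsT
      exact ⟨z, fun hiff => h2 (hiff.mp h1)⟩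
    · have hsT : s ∈ T := by
        by_contra h
        exact hsiff ⟨fun h' => absurd h' hsS, fun h' => absurd h' h⟩
      obtain ⟨z, h1, h2⟩ := dist_sets j i T S s hsT hsS
      exact ⟨z, fun hiff => h2 (hiff.mpr h1)⟩

variable (m n)

def R : Finset (Fin m × Finset (Fin n)) :=
  Finset.univ.filter (fun p => p.2.Nonempty ∧ (p.1 = 0 → (0 : Fin n) ∈ p.2))

variable {m n}

lemma mem_R (p : Fin m × Finset (Fin n)) :
    p ∈ R m n ↔ p.2.Nonempty ∧ (p.1 = 0 → (0 : Fin n) ∈ p.2) := by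
  simp [R]

lemma card_R (hm : 2 ≤ m) (hn : 2 ≤ n) :
    (R m n).card = m * (2 ^ n - 1) - 2 ^ (n - 1) + 1 := by
  classical
  set F1 : Finset (Finset (Fin n)) := Finset.univ.filter (fun S => (0 : Fin n) ∈ S) with hF1
  set F2 : Finset (Finset (Fin n)) := Finset.univ.filter (fun S => S.Nonempty) with hF2
  have hcard1 : F1.card = 2 ^ (n - 1) := by
    have hb : F1.card = ((Finset.univ.erase (0 : Fin n)).powerset).card := by
      apply Finset.card_bij' (fun S _ => S.erase 0) (fun S _ => insert 0 S)
      · intro S hS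
        rw [hF1, Finset.mem_filter] at hS
        exact Finset.insert_erase hS.2
      · intro S hS
        rw [Finset.mem_powerset] at hS
        apply Finset.erase_insert
        intro h0S
        exact absurd (hS h0S) (fun h => (Finset.mem_erase.mp h).1 rfl)
      · intro S hS
        rw [Finset.mem_powerset]
        intro x hx
        rcases Finset.mem_erase.mp hx with ⟨hx0, hxS⟩
        exact Finset.mem_erase.mpr ⟨hx0, Finset.mem_univ x⟩
      · intro S hS
        rw [hF1, Finset.mem_filter]
        exact ⟨Finset.mem_univ _, Finset.mem_insert_self _ _⟩
    rw [hb, Finset.card_powerset, Finset.card_erase_of_mem (Finset.mem_univ _)]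
    congr 1
    rw [Finset.card_univ, Fintype.card_fin]
  have hcard2 : F2.card = 2 ^ n - 1 := by
    have he : F2 = Finset.univ.erase ∅ := by
      ext S
      rw [hF2, Finset.mem_filter, Finset.mem_erase]
      constructor
      · rintro ⟨-, hS⟩
        exact ⟨Finset.nonempty_iff_ne_empty.mp hS, Finset.mem_univ _⟩
      · rintro ⟨hS, -⟩
        exact ⟨Finset.mem_univ _, Finset.nonempty_iff_ne_empty.mpr hS⟩
    rw [he, Finset.card_erase_of_mem (Finset.mem_univ _), Finset.card_univ,
      Fintype.card_finset, Fintype.card_fin]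
  have hsplit : R m n = ({(0 : Fin m)} ×ˢ F1) ∪ ((Finset.univ.erase (0 : Fin m)) ×ˢ F2) := by
    ext p
    rw [mem_R, Finset.mem_union, Finset.mem_product, Finset.mem_product, Finset.mem_singleton,
      Finset.mem_erase, hF1, hF2, Finset.mem_filter, Finset.mem_filter]
    constructor
    · rintro ⟨hne, h0⟩
      by_cases hp1 : p.1 = 0
      · exact Or.inl ⟨hp1, Finset.mem_univ _, h0 hp1⟩
      · exact Or.inr ⟨⟨hp1, Finset.mem_univ _⟩, Finset.mem_univ _, hne⟩
    · rintro (⟨hp1, -, h0⟩ | ⟨⟨hp1, -⟩, -, hne⟩)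
      · exact ⟨⟨0, h0⟩, fun _ => h0⟩
      · exact ⟨hne, fun h => absurd h hp1⟩
  have hdisj : Disjoint ({(0 : Fin m)} ×ˢ F1) ((Finset.univ.erase (0 : Fin m)) ×ˢ F2) := by
    rw [Finset.disjoint_left]
    rintro p hp1 hp2
    rw [Finset.mem_product, Finset.mem_singleton] at hp1
    rw [Finset.mem_product, Finset.mem_erase] at hp2
    exact hp2.1.1 hp1.1
  rw [hsplit, Finset.card_union_of_disjoint hdisj, Finset.card_product, Finset.card_product,
    Finset.card_singleton, Finset.card_erase_of_mem (Finset.mem_univ _), Finset.card_univ,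
    Fintype.card_fin, hcard1, hcard2, one_mul]
  have hmsplit : m * (2 ^ n - 1) = (m - 1) * (2 ^ n - 1) + (2 ^ n - 1) := by
    have hm1 : m = (m - 1) + 1 := by omega
    conv_lhs => rw [hm1]
    ring
  rw [hmsplit]
  have he : 2 ^ n = 2 * 2 ^ (n - 1) := by
    rw [← pow_succ']
    congr 1
    omega
  have h1a : 1 ≤ 2 ^ (n - 1) := Nat.one_le_two_pow
  generalize (m - 1) * (2 ^ n - 1) = X
  omega

end SCAux

open SCAux in
theorem starcat_lower_special (m n : ℕ) (hm : 2 ≤ m) (hn : 2 ≤ n) :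
    ∃ (A : DFA (Fin 3) (Fin m)) (B : DFA (Fin 3) (Fin n)),
      A.accept = {A.start} ∧
      A.accepts * B.accepts = (A.accepts)∗ * B.accepts ∧
      ∀ (σ : Type) (inst : Fintype σ) (C : DFA (Fin 3) σ),
        C.accepts = A.accepts * B.accepts →
        m * (2 ^ n - 1) - 2 ^ (n - 1) + 1 ≤ @Fintype.card σ inst := by
  haveI : NeZero m := ⟨by omega⟩
  haveI : NeZero n := ⟨by omega⟩
  refine ⟨Ad m, Bd n, rfl, by rw [Ad_kstar], ?_⟩
  intro σ inst C hC
  classical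
  have hacc : C.accepts = (Dd m n).accepts := by rw [hC, Dd_accepts]
  have hreach : ∀ p ∈ R m n, ∃ w, (Dd m n).eval w = p := by
    intro p hp
    rw [mem_R] at hp
    obtain ⟨w, hw⟩ := reach hm p.1 p.2 hp.1 hp.2
    exact ⟨w, hw⟩
  set word : Fin m × Finset (Fin n) → List (Fin 3) := fun p =>
    if h : p ∈ R m n then Classical.choose (hreach p h) else [] with hword
  set f : Fin m × Finset (Fin n) → σ := fun p => C.eval (word p) with hf
  have hspec : ∀ p (h : p ∈ R m n), (Dd m n).eval (word p) = p := by
    intro p h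
    rw [hword]
    simp only [dif_pos h]
    exact Classical.choose_spec (hreach p h)
  have hinj : Set.InjOn f (R m n : Set (Fin m × Finset (Fin n))) := by
    intro p hp q hq hfpq
    rw [Finset.mem_coe] at hp hq
    by_contra hne
    have hpne : p.2.Nonempty := ((mem_R p).mp hp).1
    have hqne : q.2.Nonempty := ((mem_R q).mp hq).1
    obtain ⟨z, hz⟩ := dist_all hn p q hpne hqne hne
    apply hz
    have key : ∀ r (hr : r ∈ R m n),
        (((-1 : Fin n) ∈ ((Dd m n).evalFrom r z).2) ↔ word r ++ z ∈ C.accepts) := by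
      intro r hr
      rw [hacc]
      show _ ↔ (Dd m n).evalFrom (Dd m n).start (word r ++ z) ∈ (Dd m n).accept
      rw [DFA.evalFrom_of_append]
      have : (Dd m n).evalFrom (Dd m n).start (word r) = r := hspec r hr
      rw [this]
      rfl
    rw [key p hp, key q hq]
    have hCp : ∀ r, (word r ++ z ∈ C.accepts) ↔ C.evalFrom (C.eval (word r)) z ∈ C.accept := by
      intro r
      show C.evalFrom C.start (word r ++ z) ∈ C.accept ↔ _
      rw [DFA.evalFrom_of_append]
      rfl
    rw [hCp, hCp]
    have : C.eval (word p) = C.eval (word q) := hfpq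
    rw [this]
  have hle : (R m n).card ≤ (@Finset.univ σ inst).card := by
    apply Finset.card_le_card_of_injOn f (fun a _ => Finset.mem_univ _) hinj
  rw [card_R hm hn] at hle
  exact hle
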